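/- Let ν be a valuation extending ν_2, d = 2^e with e ≥ 1, b ν-integral, and F(z) = z^d + b. If x, y are ν-integral with ν(F(x) - F(y)) > 0, then ν(x - y) > 0. -/

import Mathlib

theorem valuation_sub_pos_of_image {K : Type*} [Field K] [CharZero K]
    (v : AddValuation K (WithTop ℝ)) (hv2 : v (2 : K) = 1)
    (e : ℕ) (he : 1 ≤ e) (d : ℕ) (hd : d = 2 ^ e)
    (b : K) (hb : 0 ≤ v b) (F : K → K) (hF : ∀ z, F z = z ^ d + b)
    (x y : K) (hx : 0 ≤ v x) (hy : 0 ≤ v y) (hFxy : 0 < v (F x - F y)) :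
    0 < v (x - y) := by
  by_contra h
  push_neg at h
  have hxy0 : v (x - y) = 0 := le_antisymm h (v.map_le_sub hx (by simpa using hy))
  -- key induction: v (x^(2^k) - y^(2^k)) = 0 for all k
  have key : ∀ k : ℕ, v (x ^ 2 ^ k - y ^ 2 ^ k) = 0 := by
    intro k
    induction k with
    | zero => simpa using hxy0
    | succ k ih =>
      set a := x ^ 2 ^ k
      set c := y ^ 2 ^ k
      have hc : 0 ≤ v c := by
        rw [v.map_pow]
        exact nsmul_nonneg hy _
      have h2c : 0 < v (2 * c) := by
        rw [v.map_mul, hv2]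
        have : (0 : WithTop ℝ) < 1 := by norm_num
        calc (0 : WithTop ℝ) < 1 + 0 := by simp
          _ ≤ 1 + v c := by exact add_le_add_right hc 1
      have hsum : v (a + c) = 0 := by
        have : a + c = (a - c) + 2 * c := by ring
        rw [this, v.map_add_eq_of_lt_left (by rw [ih]; exact h2c), ih]
      have hfact : x ^ 2 ^ (k + 1) - y ^ 2 ^ (k + 1) = (a - c) * (a + c) := by
        simp only [a, c]
        ring_nf
      rw [hfact, v.map_mul, ih, hsum, add_zero]
  have : v (F x - F y) = 0 := by
    have : F x - F y = x ^ 2 ^ e - y ^ 2 ^ e := by rw [hF, hF, hd]; ring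
    rw [this, key e]
  simp [this] at hFxy
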